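/- The language of exo-stratified formulae in the enriched syntax of set theory is context-free. -/

import Mathlib

/-- Alphabet of the enriched syntax of set theory. -/
inductive EAlph : Type
  | lb | rb | imp | all | deq | mem | v | prime | star | bot
deriving DecidableEq

/-- Formulae of the enriched syntax; a variable `v_n^m` is the pair `(n, m)`
(`n` apostrophes, `m` stars). -/
inductive EFm : Type
  | bot : EFm
  | eq : ℕ × ℕ → ℕ × ℕ → EFm
  | mem : ℕ × ℕ → ℕ × ℕ → EFm
  | imp : EFm → EFm → EFm
  | all : ℕ × ℕ → EFm → EFm
deriving DecidableEq

/-- The string of the variable `v_n^m`. -/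
def evarStr (p : ℕ × ℕ) : List EAlph :=
  EAlph.v :: (List.replicate p.1 EAlph.prime ++ List.replicate p.2 EAlph.star)

/-- The string of symbols of an enriched-syntax formula. -/
def EFm.str : EFm → List EAlph
  | .bot => [EAlph.bot]
  | .eq x y => evarStr x ++ [EAlph.deq] ++ evarStr y
  | .mem x y => evarStr x ++ [EAlph.mem] ++ evarStr y
  | .imp φ ψ => [EAlph.lb] ++ φ.str ++ [EAlph.imp] ++ ψ.str ++ [EAlph.rb]
  | .all x φ => [EAlph.lb, EAlph.all] ++ evarStr x ++ [EAlph.rb] ++ φ.str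

/-- Pairs of variables `(x, y)` with `x ∈ y` an atomic subformula. -/
def EFm.memPairs : EFm → Finset ((ℕ × ℕ) × (ℕ × ℕ))
  | .bot => ∅
  | .eq _ _ => ∅
  | .mem x y => {(x, y)}
  | .imp φ ψ => φ.memPairs ∪ ψ.memPairs
  | .all _ φ => φ.memPairs

/-- Pairs of variables `(x, y)` with `x ≐ y` an atomic subformula. -/
def EFm.eqPairs : EFm → Finset ((ℕ × ℕ) × (ℕ × ℕ))
  | .bot => ∅
  | .eq x y => {(x, y)}
  | .mem _ _ => ∅
  | .imp φ ψ => φ.eqPairs ∪ ψ.eqPairs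
  | .all _ φ => φ.eqPairs

/-- A formula is exo-stratified if subformulae `v_{n1}^{m1} ≐ v_{n2}^{m2}` have `m1 = m2`
and subformulae `v_{n1}^{m1} ∈ v_{n2}^{m2}` have `m1 + 1 = m2`. -/
def EFm.ExoStratified (φ : EFm) : Prop :=
  (∀ p ∈ φ.eqPairs, p.1.2 = p.2.2) ∧ (∀ p ∈ φ.memPairs, p.1.2 + 1 = p.2.2)

/-- `σ` is a stratification of `φ`. -/
def EFm.IsStratification (σ : ℕ × ℕ → ℤ) (φ : EFm) : Prop :=
  (∀ p ∈ φ.memPairs, σ p.1 = σ p.2 - 1) ∧ (∀ p ∈ φ.eqPairs, σ p.1 = σ p.2)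

/-- A formula of the enriched syntax is stratified if it has a stratification. -/
def EFm.Stratified (φ : EFm) : Prop := ∃ σ : ℕ × ℕ → ℤ, φ.IsStratification σ

namespace ExoCFG

open EAlph

/-- Nonterminals of the grammar. -/
inductive NT : Type
  | F | V | V0 | P | Q | M | K
deriving DecidableEq

deriving instance DecidableEq for ContextFreeRule

abbrev Sym := Symbol EAlph NT

abbrev t (a : EAlph) : Sym := Symbol.terminal a
abbrev nt (x : NT) : Sym := Symbol.nonterminal x

def ruleList : List (ContextFreeRule EAlph NT) :=
  [ ⟨.F, [t bot]⟩,
    ⟨.F, [nt .V0, nt .M]⟩,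
    ⟨.F, [nt .V0, nt .K]⟩,
    ⟨.F, [t lb, nt .F, t imp, nt .F, t rb]⟩,
    ⟨.F, [t lb, t all, nt .V, t rb, nt .F]⟩,
    ⟨.V0, [t v, nt .P]⟩,
    ⟨.V, [t v, nt .P, nt .Q]⟩,
    ⟨.P, []⟩,
    ⟨.P, [t prime, nt .P]⟩,
    ⟨.Q, []⟩,
    ⟨.Q, [t star, nt .Q]⟩,
    ⟨.M, [t star, nt .M, t star]⟩,
    ⟨.M, [t deq, nt .V0]⟩,
    ⟨.K, [t star, nt .K, t star]⟩,
    ⟨.K, [t mem, nt .V0, t star]⟩ ]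

abbrev G : ContextFreeGrammar EAlph := ⟨NT, .F, ruleList.toFinset⟩

/-- Intended language of each nonterminal. -/
def LangOf : NT → Set (List EAlph)
  | .P => {w | ∃ k, w = List.replicate k prime}
  | .Q => {w | ∃ m, w = List.replicate m star}
  | .V0 => {w | ∃ k, w = v :: List.replicate k prime}
  | .V => {w | ∃ x : ℕ × ℕ, w = evarStr x}
  | .M => {w | ∃ m k, w = List.replicate m star ++
      deq :: v :: (List.replicate k prime ++ List.replicate m star)}
  | .K => {w | ∃ m k, w = List.replicate m star ++
      mem :: v :: (List.replicate k prime ++ List.replicate (m + 1) star)}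
  | .F => {w | ∃ φ : EFm, φ.ExoStratified ∧ φ.str = w}

def SymSat : Sym → List EAlph → Prop
  | .terminal a, w => w = [a]
  | .nonterminal x, w => w ∈ LangOf x

/-- A word realizes a sentential form. -/
def Real : List Sym → List EAlph → Prop
  | [], w => w = []
  | x :: α, w => ∃ w1 w2, SymSat x w1 ∧ Real α w2 ∧ w = w1 ++ w2

lemma rep_swap {γ : Type*} (m : ℕ) (a : γ) :
    List.replicate m a ++ [a] = a :: List.replicate m a := by
  rw [← List.replicate_succ', List.replicate_succ]

lemma real_append {α β : List Sym} {w : List EAlph} :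
    Real (α ++ β) w ↔ ∃ w1 w2, Real α w1 ∧ Real β w2 ∧ w = w1 ++ w2 := by
  induction α generalizing w with
  | nil => simp [Real]
  | cons x α ih =>
    simp only [List.cons_append, Real]
    constructor
    · rintro ⟨w1, w2, hx, h2, rfl⟩
      obtain ⟨u1, u2, hu1, hu2, rfl⟩ := ih.mp h2
      exact ⟨w1 ++ u1, u2, ⟨w1, u1, hx, hu1, rfl⟩, hu2, by simp⟩
    · rintro ⟨w1, w2, ⟨u1, u2, hu1, hu2, rfl⟩, h2, rfl⟩
      exact ⟨u1, u2 ++ w2, hu1, ih.mpr ⟨u2, w2, hu2, h2, rfl⟩, by simp⟩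

lemma real_single_nt {x : NT} {w : List EAlph} :
    Real [nt x] w ↔ w ∈ LangOf x := by
  simp [Real, SymSat]

lemma real_terminal (w : List EAlph) : Real (w.map Symbol.terminal) w := by
  induction w with
  | nil => rfl
  | cons a w ih => exact ⟨[a], w, rfl, ih, rfl⟩

/-- Per-rule soundness. -/
lemma rule_sound {r : ContextFreeRule EAlph NT} (hr : r ∈ ruleList)
    {w : List EAlph} (hw : Real r.output w) : w ∈ LangOf r.input := by
  simp only [ruleList, List.mem_cons, List.not_mem_nil, or_false] at hr
  rcases hr with rfl | rfl | rfl | rfl | rfl | rfl | rfl | rfl | rfl | rfl | rfl | rfl | rfl | rfl | rfl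
  · -- F → bot
    simp only [Real, SymSat] at hw
    obtain ⟨w1, w2, rfl, rfl, rfl⟩ := hw
    exact ⟨.bot, by simp [EFm.ExoStratified, EFm.eqPairs, EFm.memPairs], rfl⟩
  · -- F → V0 M
    simp only [Real, SymSat, LangOf] at hw
    obtain ⟨w1, w2, ⟨k1, rfl⟩, ⟨u, w3, ⟨m, k2, rfl⟩, rfl, rfl⟩, rfl⟩ := hw
    refine ⟨.eq (k1, m) (k2, m), ?_, ?_⟩
    · constructor
      · intro p hp
        simp [EFm.eqPairs] at hp; subst hp; rfl
      · intro p hp; simp [EFm.memPairs] at hp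
    · simp [EFm.str, evarStr]
  · -- F → V0 K
    simp only [Real, SymSat, LangOf] at hw
    obtain ⟨w1, w2, ⟨k1, rfl⟩, ⟨u, w3, ⟨m, k2, rfl⟩, rfl, rfl⟩, rfl⟩ := hw
    refine ⟨.mem (k1, m) (k2, m + 1), ?_, ?_⟩
    · constructor
      · intro p hp; simp [EFm.eqPairs] at hp
      · intro p hp
        simp [EFm.memPairs] at hp; subst hp; rfl
    · simp [EFm.str, evarStr]
  · -- F → [ F → F ]
    simp only [Real, SymSat, LangOf] at hw
    obtain ⟨w1, w2, rfl, ⟨u1, w3, ⟨φ, hφ, rfl⟩, ⟨u2, w4, rfl,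
      ⟨u3, w5, ⟨ψ, hψ, rfl⟩, ⟨u4, w6, rfl, rfl, rfl⟩, rfl⟩, rfl⟩, rfl⟩, rfl⟩ := hw
    refine ⟨.imp φ ψ, ?_, ?_⟩
    · constructor
      · intro p hp
        simp only [EFm.eqPairs, Finset.mem_union] at hp
        rcases hp with hp | hp
        exacts [hφ.1 p hp, hψ.1 p hp]
      · intro p hp
        simp only [EFm.memPairs, Finset.mem_union] at hp
        rcases hp with hp | hp
        exacts [hφ.2 p hp, hψ.2 p hp]
    · simp [EFm.str]
  · -- F → [ ∀ V ] F
    simp only [Real, SymSat, LangOf] at hw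
    obtain ⟨w1, w2, rfl, ⟨u1, w3, rfl, ⟨u2, w4, ⟨x, rfl⟩,
      ⟨u3, w5, rfl, ⟨u4, w6, ⟨φ, hφ, rfl⟩, rfl, rfl⟩, rfl⟩, rfl⟩, rfl⟩, rfl⟩ := hw
    refine ⟨.all x φ, ?_, ?_⟩
    · exact ⟨fun p hp => hφ.1 p hp, fun p hp => hφ.2 p hp⟩
    · simp [EFm.str]
  · -- V0 → v P
    simp only [Real, SymSat, LangOf] at hw
    obtain ⟨w1, w2, rfl, ⟨u1, w3, ⟨k, rfl⟩, rfl, rfl⟩, rfl⟩ := hw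
    exact ⟨k, by simp⟩
  · -- V → v P Q
    simp only [Real, SymSat, LangOf] at hw
    obtain ⟨w1, w2, rfl, ⟨u1, w3, ⟨k, rfl⟩, ⟨u2, w4, ⟨m, rfl⟩, rfl, rfl⟩, rfl⟩, rfl⟩ := hw
    exact ⟨(k, m), by simp [evarStr]⟩
  · -- P → ε
    simp only [Real] at hw
    exact ⟨0, by simp [hw]⟩
  · -- P → prime P
    simp only [Real, SymSat, LangOf] at hw
    obtain ⟨w1, w2, rfl, ⟨u1, w3, ⟨k, rfl⟩, rfl, rfl⟩, rfl⟩ := hw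
    exact ⟨k + 1, by simp [List.replicate_succ]⟩
  · -- Q → ε
    simp only [Real] at hw
    exact ⟨0, by simp [hw]⟩
  · -- Q → star Q
    simp only [Real, SymSat, LangOf] at hw
    obtain ⟨w1, w2, rfl, ⟨u1, w3, ⟨m, rfl⟩, rfl, rfl⟩, rfl⟩ := hw
    exact ⟨m + 1, by simp [List.replicate_succ]⟩
  · -- M → star M star
    simp only [Real, SymSat, LangOf] at hw
    obtain ⟨w1, w2, rfl, ⟨u1, w3, ⟨m, k, rfl⟩, ⟨u2, w4, rfl, rfl, rfl⟩, rfl⟩, rfl⟩ := hw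
    refine ⟨m + 1, k, ?_⟩
    simp [List.replicate_succ, rep_swap]
  · -- M → deq V0
    simp only [Real, SymSat, LangOf] at hw
    obtain ⟨w1, w2, rfl, ⟨u1, w3, ⟨k, rfl⟩, rfl, rfl⟩, rfl⟩ := hw
    exact ⟨0, k, by simp⟩
  · -- K → star K star
    simp only [Real, SymSat, LangOf] at hw
    obtain ⟨w1, w2, rfl, ⟨u1, w3, ⟨m, k, rfl⟩, ⟨u2, w4, rfl, rfl, rfl⟩, rfl⟩, rfl⟩ := hw
    refine ⟨m + 1, k, ?_⟩
    simp [List.replicate_succ, rep_swap]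
  · -- K → mem V0 star
    simp only [Real, SymSat, LangOf] at hw
    obtain ⟨w1, w2, rfl, ⟨u1, w3, ⟨k, rfl⟩, ⟨u2, w4, rfl, rfl, rfl⟩, rfl⟩, rfl⟩ := hw
    exact ⟨0, k, by simp⟩

lemma produces_real {α β : List Sym} {w : List EAlph}
    (h : G.Produces α β) (hw : Real β w) : Real α w := by
  obtain ⟨r, hr, hrw⟩ := h
  obtain ⟨p, q, rfl, rfl⟩ := hrw.exists_parts
  have hr' : r ∈ ruleList := by
    simpa [G, List.mem_toFinset] using hr
  rw [real_append] at hw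
  obtain ⟨w1, w2, h1, hq, rfl⟩ := hw
  rw [real_append] at h1
  obtain ⟨u1, u2, hp, hout, rfl⟩ := h1
  rw [real_append]
  refine ⟨u1 ++ u2, w2, ?_, hq, rfl⟩
  rw [real_append]
  exact ⟨u1, u2, hp, real_single_nt.mpr (rule_sound hr' hout), rfl⟩

lemma derives_real {α β : List Sym} (h : G.Derives α β) {w : List EAlph}
    (hw : Real β w) : Real α w := by
  induction h using Relation.ReflTransGen.head_induction_on with
  | refl => exact hw
  | head hstep _ ih => exact produces_real hstep ih

/-! ### Completeness -/

lemma mem_rules {r : ContextFreeRule EAlph NT} (hr : r ∈ ruleList) : r ∈ G.rules :=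
  List.mem_toFinset.mpr hr

lemma produces_rule {r : ContextFreeRule EAlph NT} (hr : r ∈ ruleList) :
    G.Produces [nt r.input] r.output :=
  ⟨r, mem_rules hr, ContextFreeRule.Rewrites.input_output⟩

abbrev ts (w : List EAlph) : List Sym := w.map Symbol.terminal

lemma dP (k : ℕ) : G.Derives [nt .P] (ts (List.replicate k prime)) := by
  induction k with
  | zero => simpa using (produces_rule (r := ⟨.P, []⟩) (by simp [ruleList])).single
  | succ k ih =>
    refine (produces_rule (r := ⟨.P, [t prime, nt .P]⟩) (by simp [ruleList])).trans_derives ?_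
    simpa [List.replicate_succ] using ih.append_left [t prime]

lemma dQ (m : ℕ) : G.Derives [nt .Q] (ts (List.replicate m star)) := by
  induction m with
  | zero => simpa using (produces_rule (r := ⟨.Q, []⟩) (by simp [ruleList])).single
  | succ m ih =>
    refine (produces_rule (r := ⟨.Q, [t star, nt .Q]⟩) (by simp [ruleList])).trans_derives ?_
    simpa [List.replicate_succ] using ih.append_left [t star]

lemma dV0 (k : ℕ) : G.Derives [nt .V0] (ts (v :: List.replicate k prime)) := by
  refine (produces_rule (r := ⟨.V0, [t v, nt .P]⟩) (by simp [ruleList])).trans_derives ?_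
  simpa using (dP k).append_left [t v]

lemma dV (x : ℕ × ℕ) : G.Derives [nt .V] (ts (evarStr x)) := by
  obtain ⟨k, m⟩ := x
  refine (produces_rule (r := ⟨.V, [t v, nt .P, nt .Q]⟩) (by simp [ruleList])).trans_derives ?_
  have h1 : G.Derives ([t v] ++ [nt .P] ++ [nt .Q])
      ([t v] ++ ts (List.replicate k prime) ++ [nt .Q]) :=
    ((dP k).append_right [nt .Q]).append_left [t v]
  have h2 : G.Derives ([t v] ++ ts (List.replicate k prime) ++ [nt .Q])
      ([t v] ++ ts (List.replicate k prime) ++ ts (List.replicate m star)) :=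
    (dQ m).append_left ([t v] ++ ts (List.replicate k prime))
  have := h1.trans h2
  simpa [evarStr] using this

lemma dM (m k : ℕ) : G.Derives [nt .M]
    (ts (List.replicate m star ++
      deq :: v :: (List.replicate k prime ++ List.replicate m star))) := by
  induction m with
  | zero =>
    refine (produces_rule (r := ⟨.M, [t deq, nt .V0]⟩) (by simp [ruleList])).trans_derives ?_
    simpa using (dV0 k).append_left [t deq]
  | succ m ih =>
    refine (produces_rule (r := ⟨.M, [t star, nt .M, t star]⟩)
      (by simp [ruleList])).trans_derives ?_
    have := ((ih.append_right [t star]).append_left [t star])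
    simpa [List.replicate_succ, rep_swap] using this

lemma dK (m k : ℕ) : G.Derives [nt .K]
    (ts (List.replicate m star ++
      mem :: v :: (List.replicate k prime ++ List.replicate (m + 1) star))) := by
  induction m with
  | zero =>
    refine (produces_rule (r := ⟨.K, [t mem, nt .V0, t star]⟩)
      (by simp [ruleList])).trans_derives ?_
    have := ((dV0 k).append_right [t star]).append_left [t mem]
    simpa [List.replicate_succ] using this
  | succ m ih =>
    refine (produces_rule (r := ⟨.K, [t star, nt .K, t star]⟩)
      (by simp [ruleList])).trans_derives ?_
    have := ((ih.append_right [t star]).append_left [t star])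
    simpa [List.replicate_succ, rep_swap] using this

lemma dF : ∀ φ : EFm, φ.ExoStratified → G.Derives [nt .F] (ts φ.str) := by
  intro φ hφ
  induction φ with
  | bot =>
    simpa [EFm.str] using (produces_rule (r := ⟨.F, [t bot]⟩) (by simp [ruleList])).single
  | eq x y =>
    obtain ⟨k1, m1⟩ := x
    obtain ⟨k2, m2⟩ := y
    have hm : m1 = m2 := hφ.1 ((k1, m1), (k2, m2)) (by simp [EFm.eqPairs])
    subst hm
    refine (produces_rule (r := ⟨.F, [nt .V0, nt .M]⟩) (by simp [ruleList])).trans_derives ?_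
    have h1 := (dV0 k1).append_right [nt .M]
    have h2 := (dM m1 k2).append_left (ts (v :: List.replicate k1 prime))
    have := h1.trans h2
    simpa [EFm.str, evarStr] using this
  | mem x y =>
    obtain ⟨k1, m1⟩ := x
    obtain ⟨k2, m2⟩ := y
    have hm : m1 + 1 = m2 := hφ.2 ((k1, m1), (k2, m2)) (by simp [EFm.memPairs])
    subst hm
    refine (produces_rule (r := ⟨.F, [nt .V0, nt .K]⟩) (by simp [ruleList])).trans_derives ?_
    have h1 := (dV0 k1).append_right [nt .K]
    have h2 := (dK m1 k2).append_left (ts (v :: List.replicate k1 prime))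
    have := h1.trans h2
    simpa [EFm.str, evarStr] using this
  | imp φ ψ ihφ ihψ =>
    have hφ' : φ.ExoStratified :=
      ⟨fun p hp => hφ.1 p (Finset.mem_union_left _ hp),
       fun p hp => hφ.2 p (Finset.mem_union_left _ hp)⟩
    have hψ' : ψ.ExoStratified :=
      ⟨fun p hp => hφ.1 p (Finset.mem_union_right _ hp),
       fun p hp => hφ.2 p (Finset.mem_union_right _ hp)⟩
    refine (produces_rule (r := ⟨.F, [t lb, nt .F, t imp, nt .F, t rb]⟩)
      (by simp [ruleList])).trans_derives ?_
    have h1 : G.Derives ([t lb] ++ [nt .F] ++ ([t imp] ++ [nt .F] ++ [t rb]))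
        ([t lb] ++ ts φ.str ++ ([t imp] ++ [nt .F] ++ [t rb])) := by
      simpa using ((ihφ hφ').append_right ([t imp] ++ [nt .F] ++ [t rb])).append_left [t lb]
    have h2 : G.Derives ([t lb] ++ ts φ.str ++ ([t imp] ++ [nt .F] ++ [t rb]))
        ([t lb] ++ ts φ.str ++ ([t imp] ++ ts ψ.str ++ [t rb])) := by
      have := (((ihψ hψ').append_right [t rb]).append_left
        ([t lb] ++ ts φ.str ++ [t imp]))
      simpa [List.append_assoc] using this
    have := h1.trans h2
    simpa [EFm.str] using this
  | all x φ ihφ =>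
    have hφ' : φ.ExoStratified := ⟨fun p hp => hφ.1 p hp, fun p hp => hφ.2 p hp⟩
    refine (produces_rule (r := ⟨.F, [t lb, t all, nt .V, t rb, nt .F]⟩)
      (by simp [ruleList])).trans_derives ?_
    have h1 : G.Derives ([t lb, t all] ++ [nt .V] ++ ([t rb] ++ [nt .F]))
        ([t lb, t all] ++ ts (evarStr x) ++ ([t rb] ++ [nt .F])) := by
      simpa using ((dV x).append_right ([t rb] ++ [nt .F])).append_left [t lb, t all]
    have h2 : G.Derives ([t lb, t all] ++ ts (evarStr x) ++ ([t rb] ++ [nt .F]))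
        ([t lb, t all] ++ ts (evarStr x) ++ ([t rb] ++ ts φ.str)) := by
      simpa using ((ihφ hφ').append_left ([t lb, t all] ++ ts (evarStr x) ++ [t rb]))
    have := h1.trans h2
    simpa [EFm.str, List.append_assoc] using this

end ExoCFG

/-- The language of exo-stratified formulae in the enriched syntax is context-free. -/
theorem exoStratified_isContextFree :
    Language.IsContextFree {s : List EAlph | ∃ φ : EFm, φ.ExoStratified ∧ φ.str = s} := by
  refine ⟨ExoCFG.G, ?_⟩
  ext w
  rw [ContextFreeGrammar.mem_language_iff]
  constructor
  · intro h
    have := ExoCFG.derives_real h (ExoCFG.real_terminal w)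
    rwa [ExoCFG.real_single_nt] at this
  · rintro ⟨φ, hφ, rfl⟩
    exact ExoCFG.dF φ hφ
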